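/- (Proposition 1) Let X₁ ≠ X₂ be vectors in 𝔽₂ⁿ and let f : 𝔽₂ⁿ → 𝔽₂ satisfy the promise that for every q ∈ 𝔽₂ⁿ, f(q) = q·X₁ or f(q) = q·X₂. Then C_{X₁}(f)² + C_{X₂}(f)² ≥ N²/2, where N = 2ⁿ. (Equivalently, running the Deutsch–Jozsa algorithm with the oracle f outputs X₁ or X₂ with probability at least 1/2.) -/
import Mathlib


/-- The inner product of two vectors in `𝔽₂ⁿ`. -/
def dotp {n : ℕ} (q X : Fin n → ZMod 2) : ZMod 2 := ∑ i, q i * X i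

/-- The Deutsch–Jozsa coefficient `C_j(f) = #{q : j·q = f q} − #{q : j·q ≠ f q}`. -/
def coefC {n : ℕ} (f : (Fin n → ZMod 2) → ZMod 2) (j : Fin n → ZMod 2) : ℤ :=
  ((Finset.univ.filter (fun q : Fin n → ZMod 2 => dotp j q = f q)).card : ℤ) -
  ((Finset.univ.filter (fun q : Fin n → ZMod 2 => dotp j q ≠ f q)).card : ℤ)

/-- Sign character on `ZMod 2`. -/
def sgn (x : ZMod 2) : ℤ := if x = 0 then 1 else -1

lemma sgn_add (a b : ZMod 2) : sgn (a + b) = sgn a * sgn b := by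
  revert a b; decide

lemma coefC_eq {n : ℕ} (f : (Fin n → ZMod 2) → ZMod 2) (j : Fin n → ZMod 2) :
    coefC f j = ∑ q, sgn (dotp j q + f q) := by
  have h : ∀ q : Fin n → ZMod 2,
      sgn (dotp j q + f q) = if dotp j q = f q then (1:ℤ) else -1 := by
    intro q
    have : ∀ a b : ZMod 2, (a + b = 0 ↔ a = b) := by decide
    by_cases hq : dotp j q = f q <;> simp [sgn, this, hq]
  simp only [h]
  rw [Finset.sum_ite, Finset.sum_const, Finset.sum_const, coefC]
  ring

lemma dotp_comm {n : ℕ} (q X : Fin n → ZMod 2) : dotp q X = dotp X q := by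
  simp [dotp, mul_comm]

lemma sum_sgn_eq_zero {n : ℕ} (d : Fin n → ZMod 2) (hd : d ≠ 0) :
    ∑ q : Fin n → ZMod 2, sgn (dotp d q) = 0 := by
  obtain ⟨i, hi⟩ : ∃ i, d i ≠ 0 := by
    by_contra h; push_neg at h; exact hd (funext fun i => h i)
  have hi1 : d i = 1 := by
    have h1 : ∀ a : ZMod 2, a ≠ 0 → a = 1 := by decide
    exact h1 _ hi
  set e : Fin n → ZMod 2 := Pi.single i 1 with he
  have key : ∀ q : Fin n → ZMod 2, dotp d (q + e) = dotp d q + 1 := by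
    intro q
    have : dotp d e = 1 := by
      simp [dotp, he, Pi.single_apply, Finset.sum_ite_eq', hi1]
    calc dotp d (q + e) = dotp d q + dotp d e := by
          simp [dotp, mul_add, Finset.sum_add_distrib]
      _ = dotp d q + 1 := by rw [this]
  have hneg : ∀ x : ZMod 2, sgn (x + 1) = - sgn x := by decide
  have h2 : ∑ q : Fin n → ZMod 2, sgn (dotp d q)
      = ∑ q : Fin n → ZMod 2, sgn (dotp d (q + e)) :=
    (Fintype.sum_equiv (Equiv.addRight e) _ _ (fun q => rfl)).symm
  have h3 : ∑ q : Fin n → ZMod 2, sgn (dotp d (q + e))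
      = - ∑ q : Fin n → ZMod 2, sgn (dotp d q) := by
    rw [← Finset.sum_neg_distrib]
    exact Finset.sum_congr rfl fun q _ => by rw [key q, hneg]
  linarith [h2, h3]

/-- **Proposition 1.** If `f` satisfies the two-secret promise for distinct `X₁ ≠ X₂`,
then `C_{X₁}(f)² + C_{X₂}(f)² ≥ N²/2` with `N = 2ⁿ`; i.e. the Deutsch–Jozsa algorithm
outputs `X₁` or `X₂` with probability at least `1/2`. -/
theorem coefC_sq_add_sq_ge {n : ℕ} (X₁ X₂ : Fin n → ZMod 2) (hX : X₁ ≠ X₂)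
    (f : (Fin n → ZMod 2) → ZMod 2)
    (hf : ∀ q, f q = dotp q X₁ ∨ f q = dotp q X₂) :
    ((coefC f X₁ : ℚ)) ^ 2 + ((coefC f X₂ : ℚ)) ^ 2 ≥ ((2 ^ n : ℚ)) ^ 2 / 2 := by
  have hd : (X₁ + X₂ : Fin n → ZMod 2) ≠ 0 := by
    intro h
    apply hX
    funext i
    have := congrFun h i
    simp only [Pi.add_apply, Pi.zero_apply] at this
    have : ∀ a b : ZMod 2, a + b = 0 → a = b := by decide
    exact this _ _ (by simpa using congrFun h i)
  have hprod : ∑ q : Fin n → ZMod 2,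
      sgn (dotp X₁ q + f q) * sgn (dotp X₂ q + f q) = 0 := by
    have : ∀ q : Fin n → ZMod 2,
        sgn (dotp X₁ q + f q) * sgn (dotp X₂ q + f q) = sgn (dotp (X₁ + X₂) q) := by
      intro q
      rw [← sgn_add]
      congr 1
      have hsplit : dotp (X₁ + X₂) q = dotp X₁ q + dotp X₂ q := by
        simp [dotp, add_mul, Finset.sum_add_distrib]
      have : ∀ a b c : ZMod 2, (a + c) + (b + c) = a + b := by decide
      rw [hsplit, this]
    rw [Finset.sum_congr rfl fun q _ => this q]
    exact sum_sgn_eq_zero _ hd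
  have hpt : ∀ q : Fin n → ZMod 2,
      sgn (dotp X₁ q + f q) + sgn (dotp X₂ q + f q)
        = sgn (dotp X₁ q + f q) * sgn (dotp X₂ q + f q) + 1 := by
    intro q
    rcases hf q with h | h
    · have : dotp X₁ q + f q = 0 := by
        rw [← dotp_comm q X₁, ← h]
        exact (by decide : ∀ a : ZMod 2, a + a = 0) _
      rw [this]; simp [sgn, add_comm]
    · have : dotp X₂ q + f q = 0 := by
        rw [← dotp_comm q X₂, ← h]
        exact (by decide : ∀ a : ZMod 2, a + a = 0) _
      rw [this]; simp [sgn, add_comm]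
  have hcard : Fintype.card (Fin n → ZMod 2) = 2 ^ n := by
    simp [Fintype.card_fun]
  have hsum : coefC f X₁ + coefC f X₂ = 2 ^ n := by
    rw [coefC_eq, coefC_eq, ← Finset.sum_add_distrib]
    rw [Finset.sum_congr rfl fun q _ => hpt q]
    rw [Finset.sum_add_distrib, hprod, Finset.sum_const]
    rw [Finset.card_univ, hcard]
    ring
  have hQ : (coefC f X₁ : ℚ) + (coefC f X₂ : ℚ) = 2 ^ n := by
    exact_mod_cast congrArg (fun z : ℤ => (z : ℚ)) hsum
  rw [← hQ]
  nlinarith [sq_nonneg ((coefC f X₁ : ℚ) - (coefC f X₂ : ℚ))]
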